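/- Realizability of orbital elements: let μ > 0 and let h, e ∈ ℝ³ satisfy h ≠ 0 and h · e = 0. Then there exist vectors r₀, v₀ ∈ ℝ³ with r₀ ≠ 0 such that r₀ × v₀ = h and (v₀ × h)/μ − r₀/|r₀| = e; i.e., every pair of mutually orthogonal vectors with nonzero angular momentum arises as the angular momentum and eccentricity vector of some initial position and velocity. -/

import Mathlib

open scoped InnerProductSpace

/-- Cross product in ℝ³ (modelled as `EuclideanSpace ℝ (Fin 3)`). -/
noncomputable def cross3 (a b : EuclideanSpace ℝ (Fin 3)) : EuclideanSpace ℝ (Fin 3) :=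
  (WithLp.equiv 2 (Fin 3 → ℝ)).symm
    ![a 1 * b 2 - a 2 * b 1, a 2 * b 0 - a 0 * b 2, a 0 * b 1 - a 1 * b 0]

/-- The vector (x, y, z) ∈ ℝ³. -/
noncomputable def v3 (x y z : ℝ) : EuclideanSpace ℝ (Fin 3) :=
  (WithLp.equiv 2 (Fin 3 → ℝ)).symm ![x, y, z]

lemma cross3_apply0 (a b : EuclideanSpace ℝ (Fin 3)) :
    cross3 a b 0 = a 1 * b 2 - a 2 * b 1 := rfl
lemma cross3_apply1 (a b : EuclideanSpace ℝ (Fin 3)) :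
    cross3 a b 1 = a 2 * b 0 - a 0 * b 2 := rfl
lemma cross3_apply2 (a b : EuclideanSpace ℝ (Fin 3)) :
    cross3 a b 2 = a 0 * b 1 - a 1 * b 0 := rfl

lemma v3_apply0 (x y z : ℝ) : v3 x y z 0 = x := rfl
lemma v3_apply1 (x y z : ℝ) : v3 x y z 1 = y := rfl
lemma v3_apply2 (x y z : ℝ) : v3 x y z 2 = z := rfl

lemma ext3 {x y : EuclideanSpace ℝ (Fin 3)} (h0 : x 0 = y 0) (h1 : x 1 = y 1)
    (h2 : x 2 = y 2) : x = y := by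
  ext i; fin_cases i <;> assumption

lemma normsq3 (x : EuclideanSpace ℝ (Fin 3)) :
    ‖x‖^2 = x 0 * x 0 + x 1 * x 1 + x 2 * x 2 := by
  rw [← real_inner_self_eq_norm_sq, PiLp.inner_apply]
  simp [Fin.sum_univ_three]; ring

lemma key3 (μ : ℝ) (hμ : 0 < μ) (h p : EuclideanSpace ℝ (Fin 3)) (hp : p ≠ 0)
    (horth : ⟪h, p⟫_ℝ = 0) (b : ℝ) (hb : 0 < b) :
    ∃ r₀ v₀ : EuclideanSpace ℝ (Fin 3), r₀ ≠ 0 ∧ cross3 r₀ v₀ = h ∧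
      μ⁻¹ • cross3 v₀ (cross3 r₀ v₀) - ‖r₀‖⁻¹ • r₀ = (b * ‖h‖^2 / μ - ‖p‖⁻¹) • p := by
  have hpn : (0:ℝ) < ‖p‖ := norm_pos_iff.2 hp
  obtain ⟨a, ha, hab⟩ : ∃ a : ℝ, 0 < a ∧ a * b * ‖p‖^2 = 1 :=
    ⟨(b * ‖p‖^2)⁻¹, by positivity, by field_simp⟩
  have hd : h 0 * p 0 + h 1 * p 1 + h 2 * p 2 = 0 := by
    rw [← horth]; simp [PiLp.inner_apply, Fin.sum_univ_three]; ring
  have hn : a * b * (p 0 * p 0 + p 1 * p 1 + p 2 * p 2) = 1 := by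
    rw [← normsq3 p]; linarith [hab]
  have hcross : cross3 (a • p) (b • cross3 h p) = h := by
    refine ext3 ?_ ?_ ?_ <;>
      simp only [cross3_apply0, cross3_apply1, cross3_apply2, PiLp.smul_apply, smul_eq_mul]
    · linear_combination h 0 * hn - (a * b * p 0) * hd
    · linear_combination h 1 * hn - (a * b * p 1) * hd
    · linear_combination h 2 * hn - (a * b * p 2) * hd
  refine ⟨a • p, b • cross3 h p, smul_ne_zero (ne_of_gt ha) hp, hcross, ?_⟩
  rw [hcross]
  have hnr : ‖a • p‖⁻¹ = a⁻¹ * ‖p‖⁻¹ := by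
    rw [norm_smul, Real.norm_of_nonneg ha.le, mul_inv]
  have haa : a⁻¹ * a = 1 := inv_mul_cancel₀ ha.ne'
  have hh2 : ‖h‖^2 = h 0 * h 0 + h 1 * h 1 + h 2 * h 2 := normsq3 h
  refine ext3 ?_ ?_ ?_ <;>
    simp only [hnr, PiLp.sub_apply, PiLp.smul_apply, smul_eq_mul,
      cross3_apply0, cross3_apply1, cross3_apply2, hh2]
  · linear_combination (-(μ⁻¹ * b * h 0)) * hd - (‖p‖⁻¹ * p 0) * haa
  · linear_combination (-(μ⁻¹ * b * h 1)) * hd - (‖p‖⁻¹ * p 1) * haa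
  · linear_combination (-(μ⁻¹ * b * h 2)) * hd - (‖p‖⁻¹ * p 2) * haa

/-- Realizability of orbital elements: any pair of mutually orthogonal vectors h ≠ 0, e
arises as the angular momentum and eccentricity vector of some initial position r₀ ≠ 0
and velocity v₀. -/
theorem orbital_elements_realizable
    (μ : ℝ) (hμ : 0 < μ) (h e : EuclideanSpace ℝ (Fin 3))
    (hh : h ≠ 0) (horth : ⟪h, e⟫_ℝ = 0) :
    ∃ r₀ v₀ : EuclideanSpace ℝ (Fin 3), r₀ ≠ 0 ∧ cross3 r₀ v₀ = h ∧
      μ⁻¹ • cross3 v₀ (cross3 r₀ v₀) - ‖r₀‖⁻¹ • r₀ = e := by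
  have hhn : (0:ℝ) < ‖h‖ := norm_pos_iff.2 hh
  by_cases he : e = 0
  · subst he
    -- choose a nonzero vector orthogonal to h
    obtain ⟨p, hp, hporth⟩ : ∃ p : EuclideanSpace ℝ (Fin 3), p ≠ 0 ∧ ⟪h, p⟫_ℝ = 0 := by
      by_cases h12 : h 1 = 0 ∧ h 2 = 0
      · have h0 : h 0 ≠ 0 := by
          intro h0
          exact hh (ext3 (by simp [h0]) (by simp [h12.1]) (by simp [h12.2]))
        refine ⟨v3 (-(h 2)) 0 (h 0), ?_, ?_⟩
        · intro hq
          apply h0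
          have := congrArg (fun x : EuclideanSpace ℝ (Fin 3) => x 2) hq
          simpa [v3_apply2] using this
        · simp [PiLp.inner_apply, Fin.sum_univ_three, v3_apply0, v3_apply1, v3_apply2]
          ring
      · refine ⟨v3 0 (h 2) (-(h 1)), ?_, ?_⟩
        · intro hq
          apply h12
          constructor
          · have := congrArg (fun x : EuclideanSpace ℝ (Fin 3) => x 2) hq
            simpa using neg_eq_zero.mp (by simpa [v3_apply2] using this)
          · have := congrArg (fun x : EuclideanSpace ℝ (Fin 3) => x 1) hq
            simpa [v3_apply1] using this
        · simp [PiLp.inner_apply, Fin.sum_univ_three, v3_apply0, v3_apply1, v3_apply2]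
          ring
    have hpn : (0:ℝ) < ‖p‖ := norm_pos_iff.2 hp
    have hb : (0:ℝ) < μ / (‖h‖^2 * ‖p‖) := by positivity
    obtain ⟨r₀, v₀, h1, h2, h3⟩ := key3 μ hμ h p hp hporth _ hb
    refine ⟨r₀, v₀, h1, h2, ?_⟩
    rw [h3]
    have : μ / (‖h‖^2 * ‖p‖) * ‖h‖^2 / μ - ‖p‖⁻¹ = 0 := by
      field_simp; ring
    rw [this, zero_smul]
  · have hen : (0:ℝ) < ‖e‖ := norm_pos_iff.2 he
    have hb : (0:ℝ) < μ * (1 + ‖e‖⁻¹) / ‖h‖^2 := by positivity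
    obtain ⟨r₀, v₀, h1, h2, h3⟩ := key3 μ hμ h e he horth _ hb
    refine ⟨r₀, v₀, h1, h2, ?_⟩
    rw [h3]
    have : μ * (1 + ‖e‖⁻¹) / ‖h‖^2 * ‖h‖^2 / μ - ‖e‖⁻¹ = 1 := by
      field_simp; ring
    rw [this, one_smul]
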